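/- arXiv:2112.00378 — 2 statements merged into one kernel-verified Lean document; each statement's English description precedes it below -/
import Mathlib

section
/- Let S be a nonempty compact topological space and let ℓ : ℝ^m × S → ℝ be continuous, such that for every δ ∈ S the map θ ↦ ℓ(θ, δ) is differentiable on ℝ^m and the map (θ, δ) ↦ ∇_θ ℓ(θ, δ) is continuous on ℝ^m × S. Then the max-function φ(θ) = max_{δ ∈ S} ℓ(θ, δ) is locally Lipschitz continuous on ℝ^m. -/
/-- **Danskin's theorem, local Lipschitz part.**
Let `S` be a nonempty compact topological space and `ℓ : ℝ^m × S → ℝ` be continuous,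
differentiable in its first argument for every `δ ∈ S`, with `(θ, δ) ↦ ∇_θ ℓ(θ, δ)`
continuous.  Then the max-function `φ(θ) = max_{δ ∈ S} ℓ(θ, δ)` is locally Lipschitz. -/
theorem danskin_locallyLipschitz
    {m : ℕ} {S : Type*} [TopologicalSpace S] [CompactSpace S] [Nonempty S]
    (ℓ : EuclideanSpace ℝ (Fin m) × S → ℝ)
    (hcont : Continuous ℓ)
    (hdiff : ∀ δ : S, Differentiable ℝ (fun θ : EuclideanSpace ℝ (Fin m) => ℓ (θ, δ)))
    (hgradcont : Continuous (fun p : EuclideanSpace ℝ (Fin m) × S =>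
      fderiv ℝ (fun θ => ℓ (θ, p.2)) p.1)) :
    LocallyLipschitz (fun θ : EuclideanSpace ℝ (Fin m) => ⨆ δ : S, ℓ (θ, δ)) := by
  intro x₀
  set B := Metric.closedBall x₀ 1 with hB
  -- bound the gradient on B × S
  have hcompact : IsCompact (B ×ˢ (Set.univ : Set S)) :=
    (isCompact_closedBall x₀ 1).prod isCompact_univ
  obtain ⟨K, hK⟩ : ∃ K : ℝ, ∀ p ∈ B ×ˢ (Set.univ : Set S),
      ‖fderiv ℝ (fun θ => ℓ (θ, p.2)) p.1‖ ≤ K := by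
    obtain ⟨K, hK⟩ := (hcompact.image (hgradcont.norm)).bddAbove
    exact ⟨K, fun p hp => hK ⟨p, hp, rfl⟩⟩
  have hK0 : (0 : ℝ) ≤ K := le_trans (norm_nonneg _) (hK (x₀, Classical.arbitrary S)
    ⟨Metric.mem_closedBall_self zero_le_one, trivial⟩)
  -- each slice is Lipschitz on B
  have hslice : ∀ δ : S, LipschitzOnWith K.toNNReal (fun θ => ℓ (θ, δ)) B := by
    intro δ
    apply (convex_closedBall x₀ 1).lipschitzOnWith_of_nnnorm_fderiv_le
      (fun x _ => (hdiff δ) x)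
    intro x hx
    rw [← NNReal.coe_le_coe]
    simpa [Real.coe_toNNReal _ hK0] using hK (x, δ) ⟨hx, trivial⟩
  refine ⟨K.toNNReal, B, Metric.closedBall_mem_nhds x₀ zero_lt_one, ?_⟩
  rw [lipschitzOnWith_iff_dist_le_mul]
  intro x hx y hy
  have hbdd : ∀ z : EuclideanSpace ℝ (Fin m), BddAbove (Set.range fun δ : S => ℓ (z, δ)) :=
    fun z => (isCompact_range (hcont.comp (Continuous.prodMk_right z))).bddAbove
  have key : ∀ x ∈ B, ∀ y ∈ B, (⨆ δ : S, ℓ (x, δ)) - (⨆ δ : S, ℓ (y, δ)) ≤ K * dist x y := by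
    intro x hx y hy
    rw [sub_le_iff_le_add]
    refine ciSup_le fun δ => ?_
    have h1 : ℓ (x, δ) ≤ ℓ (y, δ) + K * dist x y := by
      have := (hslice δ).dist_le_mul x hx y hy
      rw [Real.dist_eq] at this
      have h2 : ℓ (x, δ) - ℓ (y, δ) ≤ K * dist x y := by
        calc ℓ (x, δ) - ℓ (y, δ) ≤ |ℓ (x, δ) - ℓ (y, δ)| := le_abs_self _
        _ ≤ K.toNNReal * dist x y := this
        _ = K * dist x y := by rw [Real.coe_toNNReal _ hK0]
      linarith
    refine h1.trans ((add_le_add_left (le_ciSup (hbdd y) δ) _).trans (le_of_eq (add_comm _ _)))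
  rw [Real.dist_eq, abs_sub_le_iff]
  constructor
  · simpa [Real.coe_toNNReal _ hK0] using key x hx y hy
  · simpa [Real.coe_toNNReal _ hK0, dist_comm x y] using key y hy x hx
end

section
/- Let S be a nonempty compact topological space and let ℓ : ℝ^m × S → ℝ be continuous, such that for every δ ∈ S the map θ ↦ ℓ(θ, δ) is differentiable on ℝ^m and the map (θ, δ) ↦ ∇_θ ℓ(θ, δ) is continuous on ℝ^m × S. Let δ*(θ) = {δ ∈ S : ℓ(θ, δ) = max_{δ' ∈ S} ℓ(θ, δ')} denote the (nonempty) set of maximizers. Then for every θ ∈ ℝ^m and every direction h ∈ ℝ^m, the one-sided directional derivative φ'(θ; h) = lim_{t → 0⁺} (φ(θ + t h) − φ(θ)) / t of the max-function φ(θ) = max_{δ ∈ S} ℓ(θ, δ) exists and satisfies φ'(θ; h) = sup_{δ ∈ δ*(θ)} hᵀ ∇_θ ℓ(θ, δ). -/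
open Filter Topology

set_option maxHeartbeats 1000000

/-- **Danskin's theorem, directional derivative part.**
Let `S` be a nonempty compact topological space and `ℓ : ℝ^m × S → ℝ` be continuous,
differentiable in its first argument for every `δ ∈ S`, with `(θ, δ) ↦ ∇_θ ℓ(θ, δ)`
continuous.  Then for every `θ` and every direction `h`, the one-sided directional
derivative of the max-function `φ(θ) = max_{δ ∈ S} ℓ(θ, δ)` exists and equals
`sup_{δ ∈ δ*(θ)} hᵀ ∇_θ ℓ(θ, δ)`, where `δ*(θ)` is the set of maximizers. -/
theorem danskin_directional_derivative
    {m : ℕ} {S : Type*} [TopologicalSpace S] [CompactSpace S] [Nonempty S]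
    (ℓ : EuclideanSpace ℝ (Fin m) × S → ℝ)
    (hcont : Continuous ℓ)
    (hdiff : ∀ δ : S, Differentiable ℝ (fun θ : EuclideanSpace ℝ (Fin m) => ℓ (θ, δ)))
    (hgradcont : Continuous (fun p : EuclideanSpace ℝ (Fin m) × S =>
      fderiv ℝ (fun θ => ℓ (θ, p.2)) p.1))
    (θ h : EuclideanSpace ℝ (Fin m)) :
    Tendsto
      (fun t : ℝ => ((⨆ δ : S, ℓ (θ + t • h, δ)) - ⨆ δ : S, ℓ (θ, δ)) / t)
      (𝓝[>] (0 : ℝ))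
      (𝓝 (sSup ((fun δ : S => fderiv ℝ (fun θ' => ℓ (θ', δ)) θ h) ''
        {δ : S | ℓ (θ, δ) = ⨆ δ' : S, ℓ (θ, δ')}))) := by
    classical
  -- the directional derivative function
  obtain ⟨g, hgdef⟩ : ∃ g : ℝ → S → ℝ, g =
      fun s δ => fderiv ℝ (fun θ' : EuclideanSpace ℝ (Fin m) => ℓ (θ', δ)) (θ + s • h) h :=
    ⟨_, rfl⟩
  have hg00 : (fun δ : S => fderiv ℝ (fun θ' => ℓ (θ', δ)) θ h) = g 0 := by
    funext δ; rw [hgdef]; simp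
  rw [hg00]
  set A : Set S := {δ : S | ℓ (θ, δ) = ⨆ δ' : S, ℓ (θ, δ')} with hA
  set D : ℝ := sSup (g 0 '' A) with hD
  have hgcont : Continuous (Function.uncurry g) := by
    rw [hgdef]
    have h1 : Continuous fun p : ℝ × S => ((θ + p.1 • h, p.2) : EuclideanSpace ℝ (Fin m) × S) :=
      (continuous_const.add (continuous_fst.smul continuous_const)).prodMk continuous_snd
    have h2 : Continuous fun p : ℝ × S =>
        fderiv ℝ (fun θ' : EuclideanSpace ℝ (Fin m) => ℓ (θ', p.2)) (θ + p.1 • h) :=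
      hgradcont.comp h1
    exact h2.clm_apply continuous_const
  -- derivative of s ↦ ℓ (θ + s • h, δ)
  have hderiv : ∀ (δ : S) (s : ℝ), HasDerivAt (fun s' : ℝ => ℓ (θ + s' • h, δ)) (g s δ) s := by
    intro δ s
    have h1 : HasDerivAt (fun s' : ℝ => θ + s' • h) h s := by
      simpa using ((hasDerivAt_id s).smul_const h).const_add θ
    have h2 := ((hdiff δ (θ + s • h)).hasFDerivAt.comp_hasDerivAt s h1)
    rw [hgdef]
    exact h2
  -- mean value theorem form
  have hMVT : ∀ (δ : S) (t : ℝ), 0 < t → ∃ c ∈ Set.Ioo (0:ℝ) t,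
      ℓ (θ + t • h, δ) = ℓ (θ, δ) + t * g c δ := by
    intro δ t ht
    obtain ⟨c, hc, hceq⟩ := exists_hasDerivAt_eq_slope (fun s : ℝ => ℓ (θ + s • h, δ))
      (fun s => g s δ) ht
      (fun s _ => (hderiv δ s).continuousAt.continuousWithinAt)
      (fun s _ => hderiv δ s)
    refine ⟨c, hc, ?_⟩
    have h0 : ℓ (θ + (0:ℝ) • h, δ) = ℓ (θ, δ) := by simp
    rw [h0, sub_zero] at hceq
    rw [eq_div_iff ht.ne'] at hceq
    linarith [hceq]
  -- attainment of the supremum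
  have hmax : ∀ x : EuclideanSpace ℝ (Fin m), ∃ δx : S, (∀ δ, ℓ (x, δ) ≤ ℓ (x, δx)) ∧
      (⨆ δ : S, ℓ (x, δ)) = ℓ (x, δx) := by
    intro x
    have hcx : Continuous fun δ : S => ℓ (x, δ) :=
      hcont.comp (continuous_const.prodMk continuous_id)
    obtain ⟨δx, _, hδx⟩ := isCompact_univ.exists_isMaxOn Set.univ_nonempty hcx.continuousOn
    have hδx' : ∀ δ, ℓ (x, δ) ≤ ℓ (x, δx) := fun δ => hδx (Set.mem_univ δ)
    have hb : BddAbove (Set.range fun δ : S => ℓ (x, δ)) := by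
      refine ⟨ℓ (x, δx), ?_⟩
      rintro y ⟨δ, rfl⟩
      exact hδx' δ
    exact ⟨δx, hδx', le_antisymm (ciSup_le hδx') (le_ciSup hb δx)⟩
  have hBdd : ∀ x : EuclideanSpace ℝ (Fin m), BddAbove (Set.range fun δ : S => ℓ (x, δ)) := by
    intro x
    obtain ⟨δx, hδx, _⟩ := hmax x
    exact ⟨ℓ (x, δx), by rintro y ⟨δ, rfl⟩; exact hδx δ⟩
  -- uniform bound on g on [0,1] × S
  obtain ⟨M, hM0, hM⟩ : ∃ M : ℝ, 0 ≤ M ∧ ∀ s ∈ Set.Icc (0:ℝ) 1, ∀ δ : S, |g s δ| ≤ M := by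
    have hK : IsCompact ((Set.Icc (0:ℝ) 1) ×ˢ (Set.univ : Set S)) :=
      isCompact_Icc.prod isCompact_univ
    obtain ⟨p0, _, hp⟩ := hK.exists_isMaxOn
      ⟨(0, Classical.arbitrary S), by simp⟩
      (continuous_abs.comp hgcont).continuousOn
    refine ⟨|Function.uncurry g p0|, abs_nonneg _, fun s hs δ => ?_⟩
    exact hp (Set.mk_mem_prod hs (Set.mem_univ δ))
  obtain ⟨δθ, hδθ, hφθ⟩ := hmax θ
  have hδθA : δθ ∈ A := by rw [hA]; exact hφθ.symm
  have hAne : (g 0 '' A).Nonempty := ⟨_, δθ, hδθA, rfl⟩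
  have hAbdd : BddAbove (g 0 '' A) := by
    refine ⟨M, ?_⟩
    rintro y ⟨δ, _, rfl⟩
    exact (le_abs_self _).trans (hM 0 (by norm_num) δ)
  have hD_le : ∀ δ ∈ A, g 0 δ ≤ D := fun δ hδ => le_csSup hAbdd ⟨δ, hδ, rfl⟩
  have hDM : |D| ≤ M := by
    have h1 : D ≤ M := by
      apply csSup_le hAne
      rintro y ⟨δ, _, rfl⟩
      exact (le_abs_self _).trans (hM 0 (by norm_num) δ)
    have h2 : -M ≤ D := by
      refine le_trans ?_ (hD_le δθ hδθA)
      have := hM 0 (by norm_num) δθ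
      linarith [neg_abs_le (g 0 δθ)]
    rw [abs_le]; exact ⟨h2, h1⟩
  -- uniform continuity in s near 0
  have hunif : ∀ ε > (0:ℝ), ∃ r > (0:ℝ), ∀ s : ℝ, |s| < r → ∀ δ : S,
      |g s δ - g 0 δ| < ε := by
    intro ε hε
    have htu : TendstoUniformly g (g 0) (𝓝 0) := by
      have hG : Continuous (ContinuousMap.curry ⟨Function.uncurry g, hgcont⟩) :=
        ContinuousMap.continuous _
      exact ContinuousMap.tendsto_iff_tendstoUniformly.mp (hG.tendsto 0)
    have h3 := (Metric.tendstoUniformly_iff.mp htu) ε hε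
    rw [Metric.eventually_nhds_iff] at h3
    obtain ⟨r, hr, hrs⟩ := h3
    refine ⟨r, hr, fun s hs δ => ?_⟩
    have := hrs (show dist s 0 < r by rwa [Real.dist_eq, sub_zero]) δ
    rw [Real.dist_eq] at this
    rw [abs_sub_comm]
    exact this
  rw [Metric.tendsto_nhds]
  intro ε hε
  set ε' : ℝ := ε / 8 with hε'def
  have hε' : 0 < ε' := by positivity
  -- the gap constant
  obtain ⟨c0, hc0pos, hc0⟩ : ∃ c0 > (0:ℝ), ∀ δ : S, D + ε' ≤ g 0 δ →
      ℓ (θ, δ) + c0 ≤ ℓ (θ, δθ) := by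
    set C : Set S := {δ : S | D + ε' ≤ g 0 δ} with hCdef
    by_cases hC : C.Nonempty
    · have hCclosed : IsClosed C := by
        have hc : Continuous fun δ : S => g 0 δ :=
          hgcont.comp (continuous_const.prodMk continuous_id)
        exact isClosed_le continuous_const hc
      have hCcpt : IsCompact C := hCclosed.isCompact
      have hcθ : Continuous fun δ : S => ℓ (θ, δ) :=
        hcont.comp (continuous_const.prodMk continuous_id)
      obtain ⟨δ1, hδ1C, hδ1⟩ := hCcpt.exists_isMaxOn hC hcθ.continuousOn
      have hlt : ℓ (θ, δ1) < ℓ (θ, δθ) := by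
        rcases lt_or_eq_of_le (hδθ δ1) with h1 | h1
        · exact h1
        · exfalso
          have hδ1A : δ1 ∈ A := by rw [hA]; simp only [Set.mem_setOf_eq]; rw [h1, hφθ]
          have hle := hD_le δ1 hδ1A
          have hge : D + ε' ≤ g 0 δ1 := hδ1C
          linarith
      refine ⟨ℓ (θ, δθ) - ℓ (θ, δ1), by linarith, fun δ hδ => ?_⟩
      have hδC : δ ∈ C := hδ
      have h5 : ℓ (θ, δ) ≤ ℓ (θ, δ1) := hδ1 hδC
      linarith
    · exact ⟨1, one_pos, fun δ hδ => absurd ⟨δ, hδ⟩ hC⟩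
  obtain ⟨r1, hr1, hr1p⟩ := hunif ε' hε'
  -- the radius
  set r : ℝ := min r1 (min 1 (c0 / (M + |D| + 2 * ε' + 1))) with hrdef
  have hrpos : 0 < r := by
    apply lt_min hr1
    apply lt_min one_pos
    positivity
  filter_upwards [Ioo_mem_nhdsGT_of_mem (Set.mem_Ico.mpr ⟨le_refl (0:ℝ), hrpos⟩)] with t ht
  have ht0 : 0 < t := ht.1
  have htr1 : t < r1 := lt_of_lt_of_le ht.2 (min_le_left _ _)
  have ht1 : t ≤ 1 := le_of_lt (lt_of_lt_of_le ht.2 ((min_le_right _ _).trans (min_le_left _ _)))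
  have htc0 : t * (M + |D| + 2 * ε' + 1) ≤ c0 := by
    have hlt : t < c0 / (M + |D| + 2 * ε' + 1) :=
      lt_of_lt_of_le ht.2 ((min_le_right _ _).trans (min_le_right _ _))
    have hden : 0 < M + |D| + 2 * ε' + 1 := by positivity
    calc t * (M + |D| + 2 * ε' + 1)
        ≤ (c0 / (M + |D| + 2 * ε' + 1)) * (M + |D| + 2 * ε' + 1) :=
          mul_le_mul_of_nonneg_right hlt.le hden.le
      _ = c0 := by field_simp
  -- bounds on g c δ for c ∈ (0, t)
  have hgbound : ∀ (δ : S) (c : ℝ), c ∈ Set.Ioo (0:ℝ) t →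
      |g c δ - g 0 δ| < ε' ∧ |g c δ| ≤ M := by
    intro δ c hc
    constructor
    · apply hr1p
      rw [abs_of_pos hc.1]
      exact hc.2.trans htr1
    · exact hM c ⟨hc.1.le, hc.2.le.trans ht1⟩ δ
  -- upper bound
  have hupper : (⨆ δ : S, ℓ (θ + t • h, δ)) ≤ ℓ (θ, δθ) + t * (D + 2 * ε') := by
    apply ciSup_le
    intro δ
    obtain ⟨c, hc, heq⟩ := hMVT δ t ht0
    obtain ⟨hclose, hMc⟩ := hgbound δ c hc
    rw [abs_sub_lt_iff] at hclose
    by_cases hδ : g 0 δ < D + ε'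
    · have h1 : g c δ < D + 2 * ε' := by linarith [hclose.1]
      have h2 : t * g c δ ≤ t * (D + 2 * ε') := by nlinarith
      rw [heq]
      linarith [hδθ δ]
    · push_neg at hδ
      have hgap := hc0 δ hδ
      have h1 : t * g c δ ≤ t * M :=
        mul_le_mul_of_nonneg_left ((le_abs_self _).trans hMc) ht0.le
      have h2 : t * M ≤ c0 + t * (D + 2 * ε') := by
        have hDabs : -|D| ≤ D := neg_abs_le D
        nlinarith
      rw [heq]
      linarith
  -- lower bound
  obtain ⟨y, ⟨δs, hδsA, rfl⟩, hy⟩ : ∃ y ∈ g 0 '' A, D - ε' < y :=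
    exists_lt_of_lt_csSup hAne (by linarith)
  have hlower : ℓ (θ, δθ) + t * (D - 2 * ε') ≤ ⨆ δ : S, ℓ (θ + t • h, δ) := by
    obtain ⟨c, hc, heq⟩ := hMVT δs t ht0
    obtain ⟨hclose, _⟩ := hgbound δs c hc
    rw [abs_sub_lt_iff] at hclose
    have hgc : D - 2 * ε' ≤ g c δs := by linarith [hclose.2]
    have h1 : ℓ (θ, δs) = ℓ (θ, δθ) := by
      have h2 : ℓ (θ, δs) = ⨆ δ' : S, ℓ (θ, δ') := hδsA
      rw [h2, hφθ]
    have h2 : ℓ (θ, δθ) + t * (D - 2 * ε') ≤ ℓ (θ + t • h, δs) := by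
      rw [heq, h1]
      have h3 : t * (D - 2 * ε') ≤ t * g c δs := mul_le_mul_of_nonneg_left hgc ht0.le
      linarith
    exact h2.trans (le_ciSup (hBdd (θ + t • h)) δs)
  -- conclude
  rw [Real.dist_eq]
  have hq1 : ((⨆ δ : S, ℓ (θ + t • h, δ)) - ⨆ δ : S, ℓ (θ, δ)) / t ≤ D + 2 * ε' := by
    rw [div_le_iff₀ ht0, hφθ]
    linarith
  have hq2 : D - 2 * ε' ≤ ((⨆ δ : S, ℓ (θ + t • h, δ)) - ⨆ δ : S, ℓ (θ, δ)) / t := by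
    rw [le_div_iff₀ ht0, hφθ]
    linarith
  rw [abs_sub_lt_iff]
  constructor <;> linarith
end
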